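/- arXiv:1502.02812 — 3 statements merged into one kernel-verified Lean document; each statement's English description precedes it below -/
import Mathlib

section
/- For n ≥ 3, the formal power series P(z) = Σ_{k≥0} δ_k z^k with δ_0 = δ_1 = 0, δ_2 = n + (n+2)(n+1)n(n-3)/12, and δ_k = (n(k-1)/2)·C(n+k-1, k+1) for k ≥ 3, satisfies the identity z(1-z)^n · P(z) = n(1-z)^n + C(n,2)(1-z^2) z (1-z)^n - (n - C(n+1,2) z) as formal power series; in particular P(z) is a rational function with a pole at z = 1 of order n. -/
open PowerSeries

/-- For `n ≥ 3`, the Poincaré series `P(z) = Σ δ_k z^k` of moduli of Riemannian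
metrics, with `δ 0 = δ 1 = 0`, `δ 2 = n + (n+2)(n+1)n(n-3)/12` and
`δ k = (n(k-1)/2)·C(n+k-1,k+1)` for `k ≥ 3`, satisfies
`z(1-z)^n P(z) = n(1-z)^n + C(n,2)(1-z²) z (1-z)^n - (n - C(n+1,2) z)`
as formal power series over `ℚ`; in particular `P` is rational with a pole of
order `n` at `z = 1`. -/
theorem stmt4 (n : ℕ) (hn : 3 ≤ n) (δ : ℕ → ℚ) (h0 : δ 0 = 0) (h1 : δ 1 = 0)
    (h2 : δ 2 = (n : ℚ) + ((n : ℚ) + 2) * ((n : ℚ) + 1) * (n : ℚ) * ((n : ℚ) - 3) / 12)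
    (h : ∀ k : ℕ, 3 ≤ k →
      δ k = ((n : ℚ) * ((k : ℚ) - 1) / 2) * (Nat.choose (n + k - 1) (k + 1) : ℚ)) :
    X * (1 - X) ^ n * PowerSeries.mk δ =
      PowerSeries.C (n : ℚ) * (1 - X) ^ n +
        PowerSeries.C (Nat.choose n 2 : ℚ) * (1 - X ^ 2) * X * (1 - X) ^ n -
        (PowerSeries.C (n : ℚ) - PowerSeries.C (Nat.choose (n + 1) 2 : ℚ) * X) := by
  set q : ℕ → ℚ := fun m => (Nat.choose (n - 1 + m) (n - 1) : ℚ) with hq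
  set Q : PowerSeries ℚ := PowerSeries.mk q with hQdef
  have hQ : ((1 : PowerSeries ℚ) - X) ^ n * Q = 1 := by
    have h := (invOneSubPow ℚ n).inv_val
    rw [invOneSubPow_inv_eq_one_sub_pow,
      invOneSubPow_val_eq_mk_sub_one_add_choose_of_pos ℚ n (by omega)] at h
    exact h
  have hqval : ∀ m : ℕ, q m = (Nat.choose (n - 1 + m) m : ℚ) := by
    intro m
    have h1 := Nat.choose_symm (Nat.le_add_left m (n - 1))
    rw [Nat.add_sub_cancel] at h1
    simp [hq, h1]
  have hq0 : q 0 = 1 := by rw [hqval 0]; simp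
  have hq1 : q 1 = (n : ℚ) := by
    rw [hqval 1, show n - 1 + 1 = n from by omega]; simp
  have hq2 : q 2 = ((n + 1).choose 2 : ℚ) := by
    rw [hqval 2, show n - 1 + 2 = n + 1 from by omega]
  have hq3 : q 3 = ((n + 2).choose 3 : ℚ) := by
    rw [hqval 3, show n - 1 + 3 = n + 2 from by omega]
  have hB : ((Nat.choose n 2 : ℕ) : ℚ) = (n : ℚ) * ((n : ℚ) - 1) / 2 := by
    rw [Nat.cast_choose_two]
  have hB' : ((Nat.choose (n + 1) 2 : ℕ) : ℚ) = ((n : ℚ) + 1) * (n : ℚ) / 2 := by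
    rw [Nat.cast_choose_two]; push_cast; ring
  have hT : ((Nat.choose (n + 2) 3 : ℕ) : ℚ) * 3 =
      ((n : ℚ) + 2) * ((n : ℚ) + 1) / 2 * (n : ℚ) := by
    have := Nat.choose_succ_right_eq (n + 2) 2
    have hc : ((Nat.choose (n + 2) 3 : ℕ) : ℚ) * 3
        = ((Nat.choose (n + 2) 2 : ℕ) : ℚ) * ((n + 2 - 2 : ℕ) : ℚ) := by
      exact_mod_cast congrArg (Nat.cast : ℕ → ℚ) this
    rw [hc, show n + 2 - 2 = n from by omega, Nat.cast_choose_two]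
    push_cast; ring
  have hkey : X * PowerSeries.mk δ =
      PowerSeries.C (n : ℚ) + PowerSeries.C (Nat.choose n 2 : ℚ) * X
        - PowerSeries.C (Nat.choose n 2 : ℚ) * X ^ 3
        - PowerSeries.C (n : ℚ) * Q
        + PowerSeries.C (Nat.choose (n + 1) 2 : ℚ) * (X * Q) := by
    ext k
    match k with
    | 0 =>
      simp only [coeff_zero_X_mul, map_add, map_sub, coeff_zero_eq_constantCoeff,
        constantCoeff_C, map_mul, map_pow, constantCoeff_X, constantCoeff_mk, hQdef]
      rw [hq0]; ring
    | 1 =>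
      simp only [coeff_succ_X_mul, map_add, map_sub, coeff_C_mul, coeff_C, coeff_X,
        coeff_X_pow, coeff_mk, hQdef]
      norm_num
      rw [h0, hq0, hq1, hB, hB']
      ring
    | 2 =>
      simp only [coeff_succ_X_mul, map_add, map_sub, coeff_C_mul, coeff_C, coeff_X,
        coeff_X_pow, coeff_mk, hQdef]
      norm_num
      rw [h1, hq1, hq2, hB']
      ring
    | 3 =>
      simp only [coeff_succ_X_mul, map_add, map_sub, coeff_C_mul, coeff_C, coeff_X,
        coeff_X_pow, coeff_mk, hQdef]
      norm_num
      rw [h2, hq2, hq3, hB, hB']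
      linear_combination ((n : ℚ) / 3) * hT
    | (m + 4) =>
      simp only [coeff_succ_X_mul, map_add, map_sub, coeff_C_mul, coeff_C, coeff_X,
        coeff_X_pow, coeff_mk, hQdef]
      norm_num [show ¬ (m + 4 = 3) from by omega, show ¬ (m + 4 = 1) from by omega]
      rw [h (m + 3) (by omega), hqval (m + 4), hqval (m + 3),
        show n - 1 + (m + 4) = n + m + 3 from by omega,
        show n - 1 + (m + 3) = n + m + 2 from by omega,
        show n + (m + 3) - 1 = n + m + 2 from by omega]
      have hpas : ((Nat.choose (n + m + 3) (m + 4) : ℕ) : ℚ)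
          = ((Nat.choose (n + m + 2) (m + 3) : ℕ) : ℚ)
            + ((Nat.choose (n + m + 2) (m + 4) : ℕ) : ℚ) := by
        exact_mod_cast congrArg (Nat.cast : ℕ → ℚ)
          (Nat.choose_succ_succ (n + m + 2) (m + 3))
      have hre : ((Nat.choose (n + m + 2) (m + 4) : ℕ) : ℚ) * ((m : ℚ) + 4)
          = ((Nat.choose (n + m + 2) (m + 3) : ℕ) : ℚ) * ((n : ℚ) - 1) := by
        have := Nat.choose_succ_right_eq (n + m + 2) (m + 3)
        have hc : ((Nat.choose (n + m + 2) (m + 4) : ℕ) : ℚ) * ((m + 4 : ℕ) : ℚ)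
            = ((Nat.choose (n + m + 2) (m + 3) : ℕ) : ℚ) * ((n + m + 2 - (m + 3) : ℕ) : ℚ) := by
          exact_mod_cast congrArg (Nat.cast : ℕ → ℚ) this
        rw [show n + m + 2 - (m + 3) = n - 1 from by omega] at hc
        rw [Nat.cast_sub (by omega : 1 ≤ n)] at hc
        push_cast at hc ⊢
        linear_combination hc
      push_cast [hB']
      push_cast at hpas hre
      linear_combination ((n : ℚ) / 2) * hre + (n : ℚ) * hpas
  linear_combination ((1 : PowerSeries ℚ) - X) ^ n * hkey
    - (PowerSeries.C (n : ℚ) - PowerSeries.C (Nat.choose (n + 1) 2 : ℚ) * X) * hQ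
end

section
/- For n ≥ 3, the coefficient of z^2 in the Taylor expansion at z=0 of the rational function P(z) = n/z + C(n,2)(1-z²) - (1/(1-z)^n)(n/z - C(n+1,2)) equals n + (n+2)(n+1)n(n-3)/12. -/
open PowerSeries

lemma choose_n2_3 (n : ℕ) : ((n+2).choose 3 : ℚ) = (n+2)*(n+1)*n/6 := by
  have hd : (n+2).descFactorial 3 = (n+2)*(n+1)*n := by
    simp [Nat.descFactorial]
    ring
  have h := Nat.descFactorial_eq_factorial_mul_choose (n+2) 3
  rw [hd] at h
  have : ((n+2)*(n+1)*n : ℚ) = 6 * ((n+2).choose 3 : ℚ) := by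
    exact_mod_cast congrArg (Nat.cast : ℕ → ℚ) h
  field_simp
  linarith [this]

/-- For `n ≥ 3`, the coefficient of `z²` in the Taylor expansion at `0` of
`P(z) = n/z + C(n,2)(1-z²) - (1/(1-z)^n)(n/z - C(n+1,2))` equals
`n + (n+2)(n+1)n(n-3)/12`.  Using `1/(1-z)^n = Σ C(n+k-1,k) z^k`, the coefficient
of `z²` in `P` is the coefficient of `z³` in `z·P(z)`, i.e. in
`n + C(n,2)(z - z³) - (n - C(n+1,2) z)·Σ C(n+k-1,k) z^k`. -/
theorem stmt6 (n : ℕ) (hn : 3 ≤ n)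
    (G : PowerSeries ℚ) (hG : G = PowerSeries.mk fun k => (Nat.choose (n + k - 1) k : ℚ)) :
    PowerSeries.coeff (R := ℚ) 3
      (PowerSeries.C (R := ℚ) (n : ℚ) +
        PowerSeries.C (R := ℚ) (Nat.choose n 2 : ℚ) * (X - X ^ 3) -
        (PowerSeries.C (R := ℚ) (n : ℚ) - PowerSeries.C (R := ℚ) (Nat.choose (n + 1) 2 : ℚ) * X) * G)
      = (n : ℚ) + ((n : ℚ) + 2) * ((n : ℚ) + 1) * (n : ℚ) * ((n : ℚ) - 3) / 12 := by
  subst hG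
  rw [sub_mul, mul_assoc]
  simp only [map_sub, map_add, coeff_C_mul, PowerSeries.coeff_C]
  rw [show (3:ℕ) = 2 + 1 from rfl, PowerSeries.coeff_succ_X_mul]
  simp only [PowerSeries.coeff_mk, map_sub, PowerSeries.coeff_X, PowerSeries.coeff_X_pow]
  have h1 : n + 2 + 1 - 1 = n + 2 := by omega
  have h2 : n + 1 + 1 - 1 = n + 1 := by omega
  rw [h1, h2]
  have e3 := choose_n2_3 n
  have e2 : ((n+1).choose 2 : ℚ) = (n+1)*n/2 := by
    rw [Nat.cast_choose_two]; push_cast; ring_nf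
  have en2 : (n.choose 2 : ℚ) = (n:ℚ)*((n:ℚ)-1)/2 := Nat.cast_choose_two ℚ n
  norm_num [e3, e2, en2]
  ring
end

section
/- For every n ≥ 2, Thomas's sequence s_k (with s_k = n + (n²(k-1) - n(k+1))/(2(k+1))·C(n+k,k) for n ≥ 3, or s_k = (k+1)(k-2)/2 + δ_{k,2} for n = 2) is monotone nondecreasing in k for k ≥ 2 and tends to infinity; in particular the algebra of scalar differential invariants of Riemannian metrics is infinitely generated as a plain (non-differential) algebra. -/
/-- For every `n ≥ 2`, Thomas's sequence `s_k` (given for `n = 2` by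
`s k = (k+1)(k-2)/2 + [k=2]` and for `n ≥ 3` by
`s k = n + (n²(k-1)-n(k+1))/(2(k+1))·C(n+k,k)`, for `k ≥ 2`) is monotone
nondecreasing in `k` for `k ≥ 2` and tends to infinity; in particular the
algebra of scalar differential invariants of Riemannian metrics is infinitely
generated as a plain algebra. -/
theorem stmt16 (n : ℕ) (hn : 2 ≤ n) (s : ℕ → ℚ)
    (hs2 : n = 2 → ∀ k : ℕ, 2 ≤ k →
      s k = ((k : ℚ) + 1) * ((k : ℚ) - 2) / 2 + (if k = 2 then 1 else 0))
    (hs3 : 3 ≤ n → ∀ k : ℕ, 2 ≤ k →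
      s k = (n : ℚ) + (((n : ℚ) ^ 2 * ((k : ℚ) - 1) - (n : ℚ) * ((k : ℚ) + 1)) /
        (2 * ((k : ℚ) + 1))) * (Nat.choose (n + k) k : ℚ)) :
    (∀ k : ℕ, 2 ≤ k → s k ≤ s (k + 1)) ∧
      Filter.Tendsto s Filter.atTop Filter.atTop := by
  have key : (∀ k : ℕ, 2 ≤ k → s k ≤ s (k + 1)) ∧
      (∀ k : ℕ, 2 ≤ k → (k : ℚ) - 2 ≤ s k) := by
    rcases eq_or_lt_of_le hn with h2 | h3
    · -- n = 2
      have hs := hs2 h2.symm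
      constructor
      · intro k hk
        rw [hs k hk, hs (k + 1) (by omega)]
        have hkQ : (2 : ℚ) ≤ (k : ℚ) := by exact_mod_cast hk
        by_cases hk2 : k = 2
        · subst hk2; norm_num
        · rw [if_neg hk2, if_neg (by omega)]
          push_cast
          nlinarith [hkQ]
      · intro k hk
        rw [hs k hk]
        have hkQ : (2 : ℚ) ≤ (k : ℚ) := by exact_mod_cast hk
        by_cases hk2 : k = 2
        · subst hk2; norm_num
        · rw [if_neg hk2]; nlinarith [hkQ]
    · -- n ≥ 3
      have hn3 : 3 ≤ n := h3
      have hs := hs3 hn3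
      have hnQ : (3 : ℚ) ≤ (n : ℚ) := by exact_mod_cast hn3
      -- coefficient
      set c : ℕ → ℚ := fun k =>
        ((n : ℚ) ^ 2 * ((k : ℚ) - 1) - (n : ℚ) * ((k : ℚ) + 1)) / (2 * ((k : ℚ) + 1)) with hc
      have hden : ∀ k : ℕ, (0 : ℚ) < 2 * ((k : ℚ) + 1) := by
        intro k
        have : (0 : ℚ) ≤ (k : ℚ) := Nat.cast_nonneg k
        linarith
      have hclow : ∀ k : ℕ, 2 ≤ k → 3 * ((k : ℚ) - 2) / ((k : ℚ) + 1) ≤ c k := by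
        intro k hk
        have hkQ : (2 : ℚ) ≤ (k : ℚ) := by exact_mod_cast hk
        have ha : (0:ℚ) ≤ (n:ℚ) - 3 := by linarith
        have hb : (0:ℚ) ≤ (k:ℚ) - 2 := by linarith
        have hnum : 6 * ((k:ℚ) - 2) ≤ (n : ℚ) ^ 2 * ((k : ℚ) - 1) - (n : ℚ) * ((k : ℚ) + 1) := by
          nlinarith [mul_nonneg ha hb, mul_nonneg (mul_nonneg ha ha) hb,
            mul_nonneg (mul_nonneg ha hb) hb, mul_nonneg ha ha]
        rw [hc]
        rw [div_le_div_iff₀ (by linarith) (hden k)]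
        nlinarith [hnum, hkQ]
      have hc0 : ∀ k : ℕ, 2 ≤ k → 0 ≤ c k := by
        intro k hk
        have hkQ : (2 : ℚ) ≤ (k : ℚ) := by exact_mod_cast hk
        refine le_trans ?_ (hclow k hk)
        apply div_nonneg <;> linarith
      have hcmono : ∀ k : ℕ, 2 ≤ k → c k ≤ c (k + 1) := by
        intro k hk
        have hkQ : (2 : ℚ) ≤ (k : ℚ) := by exact_mod_cast hk
        rw [hc]
        simp only []
        rw [div_le_div_iff₀ (hden k) (hden (k + 1))]
        push_cast
        nlinarith [hkQ, hnQ]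
      have hCmono : ∀ k : ℕ,
          (Nat.choose (n + k) k : ℚ) ≤ (Nat.choose (n + (k + 1)) (k + 1) : ℚ) := by
        intro k
        have h : Nat.choose (n + k) k ≤ Nat.choose (n + k + 1) (k + 1) := by
          rw [Nat.choose_succ_succ]
          exact Nat.le_add_right _ _
        have he : n + (k + 1) = n + k + 1 := by omega
        rw [he]
        exact_mod_cast h
      have hC0 : ∀ k : ℕ, (0 : ℚ) ≤ (Nat.choose (n + k) k : ℚ) := fun k => Nat.cast_nonneg _
      constructor
      · intro k hk
        rw [hs k hk, hs (k + 1) (by omega)]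
        have : c k * (Nat.choose (n + k) k : ℚ) ≤
            c (k + 1) * (Nat.choose (n + (k + 1)) (k + 1) : ℚ) := by
          apply mul_le_mul (hcmono k hk) (hCmono k) (hC0 k)
          exact le_trans (hc0 k hk) (hcmono k hk)
        exact add_le_add_right this _
      · intro k hk
        rw [hs k hk]
        have hkQ : (2 : ℚ) ≤ (k : ℚ) := by exact_mod_cast hk
        have hCk : ((k : ℚ) + 1) ≤ (Nat.choose (n + k) k : ℚ) := by
          have h1 : Nat.choose (k + 1) k ≤ Nat.choose (n + k) k :=
            Nat.choose_le_choose k (by omega)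
          rw [Nat.choose_succ_self_right] at h1
          exact_mod_cast h1
        have hprod : 3 * ((k : ℚ) - 2) ≤ c k * (Nat.choose (n + k) k : ℚ) := by
          have h1 : 3 * ((k : ℚ) - 2) / ((k : ℚ) + 1) * ((k : ℚ) + 1)
              ≤ c k * (Nat.choose (n + k) k : ℚ) := by
            apply mul_le_mul (hclow k hk) hCk (by linarith)
            exact hc0 k hk
          rwa [div_mul_cancel₀] at h1
          linarith
        have : 0 ≤ 3 * ((k : ℚ) - 2) := by linarith
        calc (k : ℚ) - 2 ≤ (n : ℚ) + 3 * ((k : ℚ) - 2) := by linarith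
          _ ≤ (n : ℚ) + c k * (Nat.choose (n + k) k : ℚ) := by linarith
  refine ⟨key.1, ?_⟩
  have hlin : Filter.Tendsto (fun k : ℕ => (k : ℚ) - 2) Filter.atTop Filter.atTop := by
    simpa [sub_eq_add_neg] using
      Filter.tendsto_atTop_add_const_right Filter.atTop (-2 : ℚ)
        (tendsto_natCast_atTop_atTop (R := ℚ))
  apply Filter.tendsto_atTop_mono' _ _ hlin
  filter_upwards [Filter.eventually_ge_atTop 2] with k hk
  exact key.2 k hk
end
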